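/- Let S_h ⊆ GL₂ of finite adeles of F be defined by S_h = Δ·{β : for all finite places v, β_v ∈ GL₂(O_{F,v}) and β_v ≡ [[μ,*],[0,*]] (mod N·O_{F,v}) for a unit μ ∈ O_F^× independent of v, with det β ∈ ℚ_𝔸^×}, where Δ consists of diagonal matrices diag(1,ξ) with ξ a unit idele. Then the arithmetic group Γ_S := GL₂(F) ∩ (S_h·G_{a+}) equals Γ_{F,1}⁺(N) = {γ ∈ GL₂(O_F) : det γ totally positive, γ ≡ [[*,*],[0,ζ]] (mod N·O_F) for some ζ ∈ O_F^×}. -/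

import Mathlib

open NumberField IsDedekindDomain

noncomputable section

variable (F : Type) [Field F] [NumberField F]

/-- `x` is a unit of the ring of integers of the `v`-adic completion. -/
def IsLocalUnit (v : HeightOneSpectrum (𝓞 F))
    (x : v.adicCompletion F) : Prop :=
  x ∈ v.adicCompletionIntegers F ∧
    ∃ y : v.adicCompletion F, y ∈ v.adicCompletionIntegers F ∧ x * y = 1

/-- Membership in the set `S_h = Δ·{β}` of the statement, for a `2×2` matrix
over the finite adele ring of `F`. -/
def InSh (N : ℕ)
    (M : Matrix (Fin 2) (Fin 2) (FiniteAdeleRing (𝓞 F) F)) : Prop :=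
  -- δ = diag(1, ξ) with ξ an everywhere-local-unit idele
  ∃ ξ : FiniteAdeleRing (𝓞 F) F,
    (∀ v : HeightOneSpectrum (𝓞 F), IsLocalUnit F v (ξ v)) ∧
    ∃ β : Matrix (Fin 2) (Fin 2) (FiniteAdeleRing (𝓞 F) F),
      M = Matrix.of ![![1, 0], ![0, ξ]] * β ∧
      -- β_v ∈ GL₂(O_{F,v}) for all finite places v
      (∀ (v : HeightOneSpectrum (𝓞 F)) (i j : Fin 2),
        (β i j) v ∈ v.adicCompletionIntegers F) ∧
      (∀ v : HeightOneSpectrum (𝓞 F), IsLocalUnit F v (β.det v)) ∧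
      -- β_v ≡ [[μ, *], [0, *]] (mod N·O_{F,v}) with μ ∈ O_F^× independent of v
      (∃ μ : (𝓞 F)ˣ, ∀ v : HeightOneSpectrum (𝓞 F),
        (∃ t ∈ v.adicCompletionIntegers F,
          (β 0 0) v - algebraMap (𝓞 F) (v.adicCompletion F) (μ : 𝓞 F)
            = (N : v.adicCompletion F) * t) ∧
        (∃ t ∈ v.adicCompletionIntegers F,
          (β 1 0) v = (N : v.adicCompletion F) * t)) ∧
      -- det β ∈ ℚ_𝔸^× : the component of det β at v is the rational number
      -- attached to the residue characteristic of v
      (∃ q : ℕ → ℚ, ∀ (v : HeightOneSpectrum (𝓞 F)) (p : ℕ), p.Prime →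
        (p : 𝓞 F) ∈ v.asIdeal →
          β.det v = algebraMap F (v.adicCompletion F) (algebraMap ℚ F (q p)))

/-! ### Auxiliary lemmas -/

section Aux

variable {R : Type*} [CommRing R] [IsDedekindDomain R]

open IsDedekindDomain.HeightOneSpectrum in
lemma dvd_of_forall_intValuationDef_le {a b : R} (hb : b ≠ 0)
    (h : ∀ v : HeightOneSpectrum R, v.intValuationDef a ≤ v.intValuationDef b) : b ∣ a := by
  by_cases ha : a = 0
  · simp [ha]
  rw [← Ideal.mem_span_singleton, ← Ideal.span_singleton_le_iff_mem, ← Ideal.dvd_iff_le,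
    ← Associates.mk_dvd_mk]
  suffices hle : (Associates.mk (Ideal.span {b} : Ideal R)).factors ≤
      (Associates.mk (Ideal.span {a} : Ideal R)).factors from Associates.factors_le.mp hle
  have hsa : Associates.mk (Ideal.span {a} : Ideal R) ≠ 0 := by
    rw [Associates.mk_ne_zero, Ne, Ideal.zero_eq_bot, Ideal.span_singleton_eq_bot]; exact ha
  have hsb : Associates.mk (Ideal.span {b} : Ideal R) ≠ 0 := by
    rw [Associates.mk_ne_zero, Ne, Ideal.zero_eq_bot, Ideal.span_singleton_eq_bot]; exact hb
  obtain ⟨sa, hsa'⟩ := Associates.factors_eq_some_iff_ne_zero.mpr hsa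
  obtain ⟨sb, hsb'⟩ := Associates.factors_eq_some_iff_ne_zero.mpr hsb
  classical
  rw [hsa', hsb', WithTop.coe_le_coe, Multiset.le_iff_count]
  intro p
  obtain ⟨I, hImk⟩ := Associates.mk_surjective (p : Associates (Ideal R))
  have hIirr : Irreducible I := Associates.irreducible_mk.mp (hImk ▸ p.2)
  have hIprime : Prime I := UniqueFactorizationMonoid.irreducible_iff_prime.mp hIirr
  set v : HeightOneSpectrum R := ⟨I, Ideal.isPrime_of_prime hIprime, hIprime.ne_zero⟩ with hv
  have := h v
  rw [intValuationDef_if_neg _ ha, intValuationDef_if_neg _ hb, WithZero.exp_le_exp,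
    neg_le_neg_iff, Nat.cast_le] at this
  have hca : (Associates.mk v.asIdeal).count (Associates.mk (Ideal.span {a} : Ideal R)).factors
      = Multiset.count p sa := by
    rw [hsa']
    have : Associates.mk v.asIdeal = (p : Associates (Ideal R)) := hImk
    rw [this, Associates.count_some p.2]
  have hcb : (Associates.mk v.asIdeal).count (Associates.mk (Ideal.span {b} : Ideal R)).factors
      = Multiset.count p sb := by
    rw [hsb']
    have : Associates.mk v.asIdeal = (p : Associates (Ideal R)) := hImk
    rw [this, Associates.count_some p.2]
  rwa [hcb, hca] at this

variable {K : Type*} [Field K] [Algebra R K] [IsFractionRing R K]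

open IsDedekindDomain.HeightOneSpectrum in
lemma exists_algebraMap_eq_of_forall_valuation_le {x : K}
    (h : ∀ v : HeightOneSpectrum R, v.valuation (K := K) x ≤ 1) :
    ∃ r : R, algebraMap R K r = x := by
  obtain ⟨a, b, hb, rfl⟩ := IsFractionRing.div_surjective (A := R) x
  have hb0 : b ≠ 0 := nonZeroDivisors.ne_zero hb
  have hbK : algebraMap R K b ≠ 0 :=
    IsFractionRing.to_map_ne_zero_of_mem_nonZeroDivisors hb
  have hdvd : b ∣ a := by
    apply dvd_of_forall_intValuationDef_le hb0
    intro v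
    have := h v
    rw [map_div₀, valuation_of_algebraMap, valuation_of_algebraMap] at this
    have hbv : v.intValuation b ≠ 0 := v.intValuation_ne_zero b hb0
    rw [div_le_one₀] at this
    · simpa [intValuation_apply] using this
    · exact lt_of_le_of_ne (zero_le') (Ne.symm hbv)
  obtain ⟨c, rfl⟩ := hdvd
  refine ⟨c, ?_⟩
  rw [map_mul, mul_comm, mul_div_assoc, div_self hbK, mul_one]

end Aux

open IsDedekindDomain.HeightOneSpectrum

local notation "𝔸" => FiniteAdeleRing (𝓞 F) F

lemma FAR_apply (x : F) (v : HeightOneSpectrum (𝓞 F)) :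
    (algebraMap F 𝔸 x) v = algebraMap F (v.adicCompletion F) x := rfl

lemma FAR_mul_apply (x y : 𝔸) (v : HeightOneSpectrum (𝓞 F)) :
    (x * y) v = x v * y v := rfl

lemma FAR_sub_apply (x y : 𝔸) (v : HeightOneSpectrum (𝓞 F)) :
    (x - y) v = x v - y v := rfl

lemma FAR_one_apply (v : HeightOneSpectrum (𝓞 F)) : (1 : 𝔸) v = 1 := rfl

lemma valued_comp (x : F) (v : HeightOneSpectrum (𝓞 F)) :
    Valued.v (algebraMap F (v.adicCompletion F) x) = v.valuation F x := by
  rw [algebraMap_adicCompletion]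
  exact valuedAdicCompletion_eq_valuation' v x

lemma int_image_mem (r : 𝓞 F) (v : HeightOneSpectrum (𝓞 F)) :
    algebraMap F (v.adicCompletion F) (algebraMap (𝓞 F) F r) ∈ v.adicCompletionIntegers F := by
  rw [mem_adicCompletionIntegers, valued_comp]
  exact v.valuation_le_one (K := F) r

lemma global_of_forall_mem (x : F)
    (h : ∀ v : HeightOneSpectrum (𝓞 F),
      (algebraMap F 𝔸 x) v ∈ v.adicCompletionIntegers F) :
    ∃ r : 𝓞 F, algebraMap (𝓞 F) F r = x := by
  apply exists_algebraMap_eq_of_forall_valuation_le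
  intro v
  have := h v
  rwa [FAR_apply, mem_adicCompletionIntegers, valued_comp] at this

lemma OF_comp (r : 𝓞 F) (v : HeightOneSpectrum (𝓞 F)) :
    algebraMap (𝓞 F) (v.adicCompletion F) r
      = algebraMap F (v.adicCompletion F) (algebraMap (𝓞 F) F r) := rfl

lemma natCast_comp (n : ℕ) (v : HeightOneSpectrum (𝓞 F)) :
    (n : v.adicCompletion F) = algebraMap F (v.adicCompletion F) (n : F) := by
  rw [map_natCast]

lemma dvd_of_forall_component (x : 𝓞 F) (n : ℕ) (hn : 0 < n)
    (h : ∀ v : HeightOneSpectrum (𝓞 F), ∃ s ∈ v.adicCompletionIntegers F,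
      algebraMap F (v.adicCompletion F) (algebraMap (𝓞 F) F x)
        = (n : v.adicCompletion F) * s) :
    (n : 𝓞 F) ∣ x := by
  have hn0 : (n : 𝓞 F) ≠ 0 := Nat.cast_ne_zero.mpr hn.ne'
  apply dvd_of_forall_intValuationDef_le hn0
  intro v
  obtain ⟨s, hs, hxs⟩ := h v
  have h1 : v.intValuationDef x = Valued.v
      (algebraMap F (v.adicCompletion F) (algebraMap (𝓞 F) F x)) := by
    rw [valued_comp, valuation_of_algebraMap]
    rfl
  have h2 : v.intValuationDef ((n : 𝓞 F)) = Valued.v ((n : v.adicCompletion F)) := by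
    rw [natCast_comp, valued_comp]
    have : ((n : ℕ) : F) = algebraMap (𝓞 F) F ((n : ℕ) : 𝓞 F) := by rw [map_natCast]
    rw [this, valuation_of_algebraMap]
    rfl
  rw [h1, h2, hxs, Valuation.map_mul]
  calc Valued.v ((n : v.adicCompletion F)) * Valued.v s
      ≤ Valued.v ((n : v.adicCompletion F)) * 1 :=
        mul_le_mul_right ((mem_adicCompletionIntegers _ _ _).mp hs) _
    _ = _ := mul_one _

lemma exists_unit_of_local (x : F) (hx0 : x ≠ 0)
    (hint : ∀ v : HeightOneSpectrum (𝓞 F),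
      (algebraMap F 𝔸 x) v ∈ v.adicCompletionIntegers F)
    (hinv : ∀ v : HeightOneSpectrum (𝓞 F), ∃ y ∈ v.adicCompletionIntegers F,
      (algebraMap F 𝔸 x) v * y = 1) :
    ∃ r : (𝓞 F)ˣ, algebraMap (𝓞 F) F (r : 𝓞 F) = x := by
  obtain ⟨r, hr⟩ := global_of_forall_mem F x hint
  have h2 : ∀ v : HeightOneSpectrum (𝓞 F),
      (algebraMap F 𝔸 x⁻¹) v ∈ v.adicCompletionIntegers F := by
    intro v
    obtain ⟨y, hy, hxy⟩ := hinv v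
    rw [FAR_apply, map_inv₀]
    rw [FAR_apply] at hxy
    rw [inv_eq_of_mul_eq_one_right hxy]
    exact hy
  obtain ⟨s, hs⟩ := global_of_forall_mem F x⁻¹ h2
  have hinj := IsFractionRing.injective (𝓞 F) F
  have hrs : r * s = 1 := by
    apply hinj
    rw [map_mul, map_one, hr, hs, mul_inv_cancel₀ hx0]
  exact ⟨Units.mkOfMulEqOne r s hrs, hr⟩

/-- `Γ_S = GL₂(F) ∩ S_h·G_{a+}` equals `Γ⁺_{F,1}(N)`; an element
`γ ∈ GL₂(F)` lies in `S_h·G_{a+}` iff its finite adelic image lies in `S_h` and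
`det γ` is totally positive, and this is equivalent to the explicit congruence
description. -/
theorem stmt18
    (hF_totallyReal : ∀ φ : F →+* ℂ, ∀ x : F, (φ x).im = 0)
    (N : ℕ) (hN : 0 < N)
    (γ : Matrix (Fin 2) (Fin 2) F) (hγ : γ.det ≠ 0) :
    (InSh F N (fun i j => algebraMap F (FiniteAdeleRing (𝓞 F) F) (γ i j)) ∧
      (∀ τ : F →+* ℝ, 0 < τ γ.det))
    ↔ (∃ γ' : Matrix (Fin 2) (Fin 2) (𝓞 F),
        (∀ i j, ((γ' i j : 𝓞 F) : F) = γ i j) ∧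
        IsUnit γ'.det ∧
        (∀ τ : F →+* ℝ, 0 < τ γ.det) ∧
        (N : 𝓞 F) ∣ γ' 1 0 ∧
        ∃ ζ : (𝓞 F)ˣ, (N : 𝓞 F) ∣ (γ' 1 1 - (ζ : 𝓞 F))) := by
  have hinj := IsFractionRing.injective (𝓞 F) F
  constructor
  · rintro ⟨⟨ξ, hξ, β, hM, hint, hdet, ⟨μ, hμ⟩, -⟩, hpos⟩
    -- entrywise consequences of hM
    have h00 : algebraMap F 𝔸 (γ 0 0) = β 0 0 := by
      have := congrFun (congrFun hM 0) 0
      simpa [Matrix.mul_apply, Fin.sum_univ_two] using this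
    have h01 : algebraMap F 𝔸 (γ 0 1) = β 0 1 := by
      have := congrFun (congrFun hM 0) 1
      simpa [Matrix.mul_apply, Fin.sum_univ_two] using this
    have h10 : algebraMap F 𝔸 (γ 1 0) = ξ * β 1 0 := by
      have := congrFun (congrFun hM 1) 0
      simpa [Matrix.mul_apply, Fin.sum_univ_two] using this
    have h11 : algebraMap F 𝔸 (γ 1 1) = ξ * β 1 1 := by
      have := congrFun (congrFun hM 1) 1
      simpa [Matrix.mul_apply, Fin.sum_univ_two] using this
    -- all entries are everywhere integral
    have hIα : ∀ i j (v : HeightOneSpectrum (𝓞 F)),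
        (algebraMap F 𝔸 (γ i j)) v ∈ v.adicCompletionIntegers F := by
      intro i j v
      fin_cases i <;> fin_cases j
      · show (algebraMap F 𝔸 (γ 0 0)) v ∈ v.adicCompletionIntegers F
        rw [h00]; exact hint v 0 0
      · show (algebraMap F 𝔸 (γ 0 1)) v ∈ v.adicCompletionIntegers F
        rw [h01]; exact hint v 0 1
      · show (algebraMap F 𝔸 (γ 1 0)) v ∈ v.adicCompletionIntegers F
        rw [h10, FAR_mul_apply]; exact mul_mem (hξ v).1 (hint v 1 0)
      · show (algebraMap F 𝔸 (γ 1 1)) v ∈ v.adicCompletionIntegers F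
        rw [h11, FAR_mul_apply]; exact mul_mem (hξ v).1 (hint v 1 1)
    have hex : ∀ i j, ∃ r : 𝓞 F, algebraMap (𝓞 F) F r = γ i j := fun i j =>
      global_of_forall_mem F _ (hIα i j)
    choose g hg using hex
    -- determinant
    have hdmap : algebraMap F 𝔸 γ.det
        = Matrix.det ((algebraMap F 𝔸).mapMatrix γ) :=
      RingHom.map_det (algebraMap F 𝔸) γ
    have hmm : (algebraMap F 𝔸).mapMatrix γ
        = (fun i j => algebraMap F 𝔸 (γ i j) : Matrix (Fin 2) (Fin 2) 𝔸) := rfl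
    have hDdet : (Matrix.of ![![1, 0], ![0, ξ]] : Matrix (Fin 2) (Fin 2) 𝔸).det = ξ := by
      simp [Matrix.det_fin_two_of]
    have hdetM : algebraMap F 𝔸 γ.det = ξ * β.det := by
      rw [hdmap, hmm, hM, Matrix.det_mul, hDdet]
    have hu' : ∃ r : (𝓞 F)ˣ, algebraMap (𝓞 F) F (r : 𝓞 F) = γ.det := by
      apply exists_unit_of_local F γ.det hγ
      · intro v
        rw [hdetM, FAR_mul_apply]
        exact mul_mem (hξ v).1 (hdet v).1
      · intro v
        obtain ⟨y1, hy1, hxy1⟩ := (hξ v).2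
        obtain ⟨y2, hy2, hxy2⟩ := (hdet v).2
        refine ⟨y1 * y2, mul_mem hy1 hy2, ?_⟩
        rw [hdetM, FAR_mul_apply]
        calc ξ v * β.det v * (y1 * y2) = (ξ v * y1) * (β.det v * y2) := by ring
          _ = 1 := by rw [hxy1, hxy2, one_mul]
    obtain ⟨u, hu⟩ := hu'
    have hgdet : (Matrix.of g).det = (u : 𝓞 F) := by
      apply hinj
      rw [hu, RingHom.map_det]
      congr 1
      ext i j
      simp [RingHom.mapMatrix_apply, Matrix.map_apply, hg]
    -- divisibility of the (1,0) entry
    have hN10 : (N : 𝓞 F) ∣ g 1 0 := by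
      apply dvd_of_forall_component F _ N hN
      intro v
      obtain ⟨t, ht, htt⟩ := (hμ v).2
      refine ⟨ξ v * t, mul_mem (hξ v).1 ht, ?_⟩
      have : algebraMap F (v.adicCompletion F) (algebraMap (𝓞 F) F (g 1 0))
          = (algebraMap F 𝔸 (γ 1 0)) v := by rw [hg]; rfl
      rw [this, h10, FAR_mul_apply, htt]
      ring
    -- divisibility of g 0 0 - μ
    have hN00 : (N : 𝓞 F) ∣ g 0 0 - (μ : 𝓞 F) := by
      apply dvd_of_forall_component F _ N hN
      intro v
      obtain ⟨t, ht, htt⟩ := (hμ v).1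
      refine ⟨t, ht, ?_⟩
      have : algebraMap F (v.adicCompletion F) (algebraMap (𝓞 F) F (g 0 0 - (μ : 𝓞 F)))
          = (algebraMap F 𝔸 (γ 0 0)) v
            - algebraMap (𝓞 F) (v.adicCompletion F) (μ : 𝓞 F) := by
        rw [RingHom.map_sub, RingHom.map_sub, hg, OF_comp]; rfl
      rw [this, h00, ← htt]
    refine ⟨Matrix.of g, fun i j => hg i j, by rw [hgdet]; exact u.isUnit, hpos, hN10,
      μ⁻¹ * u, ?_⟩
    -- the congruence for the (1,1) entry
    obtain ⟨a, ha⟩ := hN00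
    obtain ⟨b, hb⟩ := hN10
    have hdetexp : (u : 𝓞 F) = g 0 0 * g 1 1 - g 0 1 * g 1 0 := by
      rw [← hgdet, Matrix.det_fin_two]
      rfl
    have key : (μ : 𝓞 F) * (g 1 1 - ((μ⁻¹ * u : (𝓞 F)ˣ) : 𝓞 F))
        = (N : 𝓞 F) * (g 0 1 * b - a * g 1 1) := by
      have hμμ : (μ : 𝓞 F) * ((μ⁻¹ : (𝓞 F)ˣ) : 𝓞 F) = 1 := by
        rw [← Units.val_mul, mul_inv_cancel, Units.val_one]
      have hval : ((μ⁻¹ * u : (𝓞 F)ˣ) : 𝓞 F) = ((μ⁻¹ : (𝓞 F)ˣ) : 𝓞 F) * (u : 𝓞 F) :=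
        Units.val_mul _ _
      rw [hval]
      linear_combination (-(g 1 1)) * ha + g 0 1 * hb - hdetexp - (u : 𝓞 F) * hμμ
    have : (N : 𝓞 F) ∣ (μ : 𝓞 F) * (g 1 1 - ((μ⁻¹ * u : (𝓞 F)ˣ) : 𝓞 F)) :=
      ⟨g 0 1 * b - a * g 1 1, key⟩
    have h2 := this.mul_left ((μ⁻¹ : (𝓞 F)ˣ) : 𝓞 F)
    have hμμ' : ((μ⁻¹ : (𝓞 F)ˣ) : 𝓞 F) * (μ : 𝓞 F) = 1 := by
      rw [← Units.val_mul, inv_mul_cancel, Units.val_one]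
    rwa [← mul_assoc, hμμ', one_mul] at h2
  · rintro ⟨γ', hγ', hu, hpos, ⟨b, hb⟩, ζ, c, hc⟩
    refine ⟨?_, hpos⟩
    obtain ⟨u, hud⟩ := hu
    have hdetγ : γ.det = algebraMap (𝓞 F) F γ'.det := by
      rw [RingHom.map_det]
      congr 1
      ext i j
      simp [RingHom.mapMatrix_apply, Matrix.map_apply, hγ']
    have hζζ : (ζ : 𝓞 F) * ((ζ⁻¹ : (𝓞 F)ˣ) : 𝓞 F) = 1 := by
      rw [← Units.val_mul, mul_inv_cancel, Units.val_one]
    have huu : (u : 𝓞 F) * ((u⁻¹ : (𝓞 F)ˣ) : 𝓞 F) = 1 := by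
      rw [← Units.val_mul, mul_inv_cancel, Units.val_one]
    have huu' : ((u⁻¹ : (𝓞 F)ˣ) : 𝓞 F) * (u : 𝓞 F) = 1 := by
      rw [← Units.val_mul, inv_mul_cancel, Units.val_one]
    set B : Matrix (Fin 2) (Fin 2) 𝔸 := Matrix.of
      ![![algebraMap F 𝔸 (γ 0 0), algebraMap F 𝔸 (γ 0 1)],
        ![algebraMap F 𝔸 (algebraMap (𝓞 F) F (γ' 1 0 * ((u⁻¹ : (𝓞 F)ˣ) : 𝓞 F))),
          algebraMap F 𝔸 (algebraMap (𝓞 F) F (γ' 1 1 * ((u⁻¹ : (𝓞 F)ˣ) : 𝓞 F)))]] with hB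
    have hγ2 : ∀ i j, algebraMap (𝓞 F) F (γ' i j) = γ i j := fun i j => hγ' i j
    have hdet2 : (u : 𝓞 F) = γ' 0 0 * γ' 1 1 - γ' 0 1 * γ' 1 0 := by
      rw [hud, Matrix.det_fin_two]
    have hBdet : B.det = 1 := by
      rw [hB, Matrix.det_fin_two_of, ← map_mul, ← map_mul, ← map_sub]
      have e1 : γ 0 0 * algebraMap (𝓞 F) F (γ' 1 1 * ((u⁻¹ : (𝓞 F)ˣ) : 𝓞 F))
          - γ 0 1 * algebraMap (𝓞 F) F (γ' 1 0 * ((u⁻¹ : (𝓞 F)ˣ) : 𝓞 F))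
          = algebraMap (𝓞 F) F (γ' 0 0 * (γ' 1 1 * ((u⁻¹ : (𝓞 F)ˣ) : 𝓞 F))
              - γ' 0 1 * (γ' 1 0 * ((u⁻¹ : (𝓞 F)ˣ) : 𝓞 F))) := by
        simp only [RingHom.map_sub, RingHom.map_mul, hγ2]
      rw [e1]
      have e2 : γ' 0 0 * (γ' 1 1 * ((u⁻¹ : (𝓞 F)ˣ) : 𝓞 F))
          - γ' 0 1 * (γ' 1 0 * ((u⁻¹ : (𝓞 F)ˣ) : 𝓞 F)) = 1 := by
        linear_combination (-((u⁻¹ : (𝓞 F)ˣ) : 𝓞 F)) * hdet2 + huu'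
      rw [e2, map_one, map_one]
    refine ⟨algebraMap F 𝔸 γ.det, ?_, B, ?_, ?_, ?_, ⟨u * ζ⁻¹, ?_⟩, ⟨fun _ => 1, ?_⟩⟩
    · -- ξ is an everywhere local unit
      intro v
      constructor
      · rw [FAR_apply, hdetγ]
        exact int_image_mem F _ v
      · refine ⟨algebraMap F (v.adicCompletion F)
          (algebraMap (𝓞 F) F ((u⁻¹ : (𝓞 F)ˣ) : 𝓞 F)), int_image_mem F _ v, ?_⟩
        rw [FAR_apply, hdetγ, ← map_mul, ← RingHom.map_mul, ← hud, huu, map_one, map_one]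
    · -- the matrix equation M = diag(1, ξ) * B
      funext i j
      have hcan : ∀ k, (u : 𝓞 F) * (γ' 1 k * ((u⁻¹ : (𝓞 F)ˣ) : 𝓞 F)) = γ' 1 k := by
        intro k
        rw [mul_comm, mul_assoc, huu', mul_one]
      have hgoal10 : algebraMap F 𝔸 (γ 1 0) = algebraMap F 𝔸 γ.det
          * algebraMap F 𝔸 (algebraMap (𝓞 F) F (γ' 1 0 * ((u⁻¹ : (𝓞 F)ˣ) : 𝓞 F))) := by
        rw [← map_mul, hdetγ, ← RingHom.map_mul, ← hud, hcan 0, hγ2]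
      have hgoal11 : algebraMap F 𝔸 (γ 1 1) = algebraMap F 𝔸 γ.det
          * algebraMap F 𝔸 (algebraMap (𝓞 F) F (γ' 1 1 * ((u⁻¹ : (𝓞 F)ˣ) : 𝓞 F))) := by
        rw [← map_mul, hdetγ, ← RingHom.map_mul, ← hud, hcan 1, hγ2]
      fin_cases i <;> fin_cases j
      · simp [Matrix.mul_apply, Fin.sum_univ_two, hB]
      · simp [Matrix.mul_apply, Fin.sum_univ_two, hB]
      · simpa [Matrix.mul_apply, Fin.sum_univ_two, hB] using hgoal10
      · simpa [Matrix.mul_apply, Fin.sum_univ_two, hB] using hgoal11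
    · -- integrality of the entries of B
      intro v i j
      fin_cases i <;> fin_cases j
      · show (algebraMap F 𝔸 (γ 0 0)) v ∈ v.adicCompletionIntegers F
        rw [← hγ' 0 0, FAR_apply]
        exact int_image_mem F _ v
      · show (algebraMap F 𝔸 (γ 0 1)) v ∈ v.adicCompletionIntegers F
        rw [← hγ' 0 1, FAR_apply]
        exact int_image_mem F _ v
      · show (algebraMap F 𝔸 (algebraMap (𝓞 F) F
            (γ' 1 0 * ((u⁻¹ : (𝓞 F)ˣ) : 𝓞 F)))) v ∈ v.adicCompletionIntegers F
        rw [FAR_apply]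
        exact int_image_mem F _ v
      · show (algebraMap F 𝔸 (algebraMap (𝓞 F) F
            (γ' 1 1 * ((u⁻¹ : (𝓞 F)ˣ) : 𝓞 F)))) v ∈ v.adicCompletionIntegers F
        rw [FAR_apply]
        exact int_image_mem F _ v
    · -- the determinant of B is an everywhere local unit
      intro v
      rw [hBdet, FAR_one_apply]
      exact ⟨one_mem _, 1, one_mem _, one_mul 1⟩
    · -- the congruence conditions
      intro v
      constructor
      · -- (0,0) entry congruent to the unit u * ζ⁻¹
        have key : γ' 0 0 - ((u * ζ⁻¹ : (𝓞 F)ˣ) : 𝓞 F)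
            = (N : 𝓞 F) * (((ζ⁻¹ : (𝓞 F)ˣ) : 𝓞 F) * (γ' 0 1 * b - γ' 0 0 * c)) := by
          have hval : ((u * ζ⁻¹ : (𝓞 F)ˣ) : 𝓞 F)
              = (u : 𝓞 F) * ((ζ⁻¹ : (𝓞 F)ˣ) : 𝓞 F) := Units.val_mul _ _
          rw [hval]
          linear_combination (-(((ζ⁻¹ : (𝓞 F)ˣ) : 𝓞 F))) * hdet2
            + ((ζ⁻¹ : (𝓞 F)ˣ) : 𝓞 F) * γ' 0 1 * hb
            - ((ζ⁻¹ : (𝓞 F)ˣ) : 𝓞 F) * γ' 0 0 * hc - γ' 0 0 * hζζ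
        refine ⟨algebraMap F (v.adicCompletion F)
          (algebraMap (𝓞 F) F (((ζ⁻¹ : (𝓞 F)ˣ) : 𝓞 F) * (γ' 0 1 * b - γ' 0 0 * c))),
          int_image_mem F _ v, ?_⟩
        show (algebraMap F 𝔸 (γ 0 0)) v
            - algebraMap (𝓞 F) (v.adicCompletion F) ((u * ζ⁻¹ : (𝓞 F)ˣ) : 𝓞 F) = _
        rw [FAR_apply, OF_comp, ← RingHom.map_sub (algebraMap F (v.adicCompletion F)),
          ← hγ2 0 0, ← RingHom.map_sub (algebraMap (𝓞 F) F), key,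
          RingHom.map_mul (algebraMap (𝓞 F) F),
          RingHom.map_mul (algebraMap F (v.adicCompletion F)),
          map_natCast (algebraMap (𝓞 F) F), map_natCast (algebraMap F (v.adicCompletion F))]
      · -- (1,0) entry divisible by N
        refine ⟨algebraMap F (v.adicCompletion F)
          (algebraMap (𝓞 F) F (b * ((u⁻¹ : (𝓞 F)ˣ) : 𝓞 F))), int_image_mem F _ v, ?_⟩
        show (algebraMap F 𝔸 (algebraMap (𝓞 F) F
            (γ' 1 0 * ((u⁻¹ : (𝓞 F)ˣ) : 𝓞 F)))) v = _
        rw [FAR_apply, hb]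
        have : ((N : 𝓞 F) * b) * ((u⁻¹ : (𝓞 F)ˣ) : 𝓞 F)
            = (N : 𝓞 F) * (b * ((u⁻¹ : (𝓞 F)ˣ) : 𝓞 F)) := mul_assoc _ _ _
        rw [this, RingHom.map_mul, RingHom.map_mul, map_natCast, map_natCast]
    · -- the determinant condition
      intro v p _ _
      show B.det v = algebraMap F (v.adicCompletion F) (algebraMap ℚ F 1)
      rw [hBdet, map_one, map_one, FAR_one_apply]
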